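/- Let ρ̃ : [0, ∞) → ℝ be locally Lipschitz. Suppose that for every ε > 0 there exist δ_ε > 0 and T_ε ≥ 0 such that for almost every t ≥ T_ε, if ρ̃(t) ≥ ε then ρ̃'(t) < −δ_ε. Then limsup_{t→∞} ρ̃(t) ≤ 0. -/

import Mathlib

open MeasureTheory
open Set Filter Topology

lemma LipschitzOnWith.weaken' {f : ℝ → ℝ} {K K' : NNReal} {s : Set ℝ}
    (h : LipschitzOnWith K f s) (hK : K ≤ K') : LipschitzOnWith K' f s := by
  intro x hx y hy
  exact (h hx hy).trans (mul_le_mul_left (by exact_mod_cast hK) _)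

lemma lipschitzOnWith_Icc_union {f : ℝ → ℝ} {K : NNReal} {a b c : ℝ}
    (h1 : LipschitzOnWith K f (Icc a b)) (h2 : LipschitzOnWith K f (Icc b c))
    (hab : a ≤ b) (hbc : b ≤ c) : LipschitzOnWith K f (Icc a c) := by
  rw [lipschitzOnWith_iff_dist_le_mul] at h1 h2 ⊢
  have main : ∀ x ∈ Icc a c, ∀ y ∈ Icc a c, x ≤ y → dist (f x) (f y) ≤ K * dist x y := by
    intro x hx y hy hxy
    rcases le_total y b with h | h
    · exact h1 x ⟨hx.1, hxy.trans h⟩ y ⟨hy.1, h⟩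
    · rcases le_total b x with h' | h'
      · exact h2 x ⟨h', hx.2⟩ y ⟨h'.trans hxy, hy.2⟩
      · calc dist (f x) (f y) ≤ dist (f x) (f b) + dist (f b) (f y) := dist_triangle _ _ _
          _ ≤ K * dist x b + K * dist b y :=
            add_le_add (h1 x ⟨hx.1, h'⟩ b ⟨hab, le_rfl⟩) (h2 b ⟨le_rfl, hbc⟩ y ⟨h, hy.2⟩)
          _ = K * (dist x b + dist b y) := by ring
          _ ≤ K * dist x y := by
            have : dist x b + dist b y = dist x y := by
              rw [Real.dist_eq, Real.dist_eq, Real.dist_eq,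
                abs_of_nonpos (by linarith), abs_of_nonpos (by linarith),
                abs_of_nonpos (by linarith)]
              ring
            rw [this]
  intro x hx y hy
  rcases le_total x y with h | h
  · exact main x hx y hy h
  · rw [dist_comm, dist_comm x y]; exact main y hy x hx h

lemma LocallyLipschitz.exists_lipschitzOnWith_Icc {f : ℝ → ℝ}
    (hf : LocallyLipschitz f) (a b : ℝ) : ∃ K, LipschitzOnWith K f (Icc a b) := by
  have hloc : ∀ x : ℝ, ∃ r > 0, ∃ K, LipschitzOnWith K f (Icc (x - r) (x + r)) := by
    intro x
    obtain ⟨K, U, hU, hKU⟩ := hf x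
    obtain ⟨r, hr, hball⟩ := Metric.mem_nhds_iff.mp hU
    refine ⟨r / 2, by linarith, K, hKU.mono fun u hu => hball ?_⟩
    rw [Metric.mem_ball, Real.dist_eq]
    rcases hu with ⟨h1, h2⟩
    rw [abs_lt]; constructor <;> linarith
  rcases le_total b a with hab | hab
  · rcases lt_or_eq_of_le hab with h | h
    · exact ⟨1, by rw [Icc_eq_empty (not_le.mpr h)]; exact lipschitzOnWith_empty _ _⟩
    · obtain ⟨r, hr, K, hK⟩ := hloc a
      subst h
      exact ⟨K, hK.mono (Icc_subset_Icc (by linarith) (by linarith))⟩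
  · set s : Set ℝ := {t | ∃ K, LipschitzOnWith K f (Icc a t)} with hs
    have hdown : ∀ {t t' : ℝ}, t' ≤ t → t ∈ s → t' ∈ s := by
      rintro t t' htt' ⟨K, hK⟩
      exact ⟨K, hK.mono (Icc_subset_Icc_right htt')⟩
    have hextend : ∀ {t t' : ℝ}, a ≤ t → t ≤ t' → t ∈ s →
        (∃ K, LipschitzOnWith K f (Icc t t')) → t' ∈ s := by
      rintro t t' hat htt' ⟨K₁, hK₁⟩ ⟨K₂, hK₂⟩
      exact ⟨max K₁ K₂, lipschitzOnWith_Icc_union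
        (hK₁.weaken' (le_max_left _ _)) (hK₂.weaken' (le_max_right _ _)) hat htt'⟩
    have hsub : Icc a b ⊆ s := by
      apply IsClosed.Icc_subset_of_forall_exists_gt
      · -- closedness of s ∩ Icc a b
        rw [← closure_subset_iff_isClosed]
        intro x hx
        have hxI : x ∈ Icc a b :=
          (closure_mono (inter_subset_right)).trans_eq isClosed_Icc.closure_eq <| hx
        refine ⟨?_, hxI⟩
        obtain ⟨r, hr, K₀, hK₀⟩ := hloc x
        obtain ⟨y, hy, hdist⟩ := Metric.mem_closure_iff.mp hx r hr
        rcases le_total x y with h | h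
        · exact hdown h hy.1
        · rw [Real.dist_eq] at hdist
          refine hextend hy.2.1 h hy.1 ⟨K₀, hK₀.mono (Icc_subset_Icc ?_ ?_)⟩
          · rw [abs_of_nonneg (by linarith)] at hdist; linarith
          · linarith
      · obtain ⟨r, hr, K, hK⟩ := hloc a
        exact ⟨K, hK.mono (Icc_subset_Icc (by linarith) (by linarith))⟩
      · rintro x ⟨hxs, hxI⟩ y hy
        obtain ⟨r, hr, K₀, hK₀⟩ := hloc x
        have hy' : x < y := hy
        have hmem : min y (x + r) ∈ Ioc x y := ⟨lt_min hy' (by linarith), min_le_left _ _⟩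
        have hmem2 : min y (x + r) ∈ s :=
          hextend hxI.1 (le_min hy'.le (by linarith)) hxs
            ⟨K₀, hK₀.mono (Icc_subset_Icc (by linarith) (min_le_right _ _))⟩
        exact ⟨min y (x + r), hmem2, hmem⟩
    exact hsub ⟨hab, le_rfl⟩

lemma key_decay {f : ℝ → ℝ} {K : NNReal} {a b c : ℝ} (hab : a ≤ b)
    (hcont : Continuous f) (hK : LipschitzOnWith K f (Icc a b))
    (hae : ∀ᵐ x ∂(volume : Measure ℝ),
      x ∈ Ico a b → HasDerivAt f (deriv f x) x ∧ deriv f x ≤ c) :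
    f b - f a ≤ c * (b - a) := by
  suffices H : ∀ ε > (0:ℝ), f b - f a ≤ (c + ε) * (b - a) + ((K:ℝ) + |c| + ε) * ε by
    have ht : Filter.Tendsto (fun ε : ℝ => (c + ε) * (b - a) + ((K:ℝ) + |c| + ε) * ε)
        (nhdsWithin 0 (Ioi 0)) (nhds (c * (b - a))) := by
      have hc : Continuous (fun ε : ℝ => (c + ε) * (b - a) + ((K:ℝ) + |c| + ε) * ε) := by
        continuity
      have := hc.tendsto 0
      simp only [add_zero, mul_zero] at this
      exact this.mono_left nhdsWithin_le_nhds
    refine ge_of_tendsto ht ?_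
    filter_upwards [self_mem_nhdsWithin] with ε hε using H ε hε
  intro ε hε
  set N : Set ℝ := {x | ¬ (x ∈ Ico a b → HasDerivAt f (deriv f x) x ∧ deriv f x ≤ c)} with hNdef
  have hN : volume N = 0 := hae
  obtain ⟨U, hNU, hUopen, hUvol⟩ := Set.exists_isOpen_lt_of_lt N (ENNReal.ofReal ε)
    (by rw [hN]; exact ENNReal.ofReal_pos.mpr hε)
  have hUfin : ∀ x, volume (U ∩ Ioc a x) ≠ ⊤ := fun x =>
    ((measure_mono Set.inter_subset_left).trans_lt
      (hUvol.trans ENNReal.ofReal_lt_top)).ne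
  set m : ℝ → ℝ := fun x => (volume (U ∩ Ioc a x)).toReal with hmdef
  have hmono : Monotone m := fun x y hxy => ENNReal.toReal_mono (hUfin y)
    (measure_mono (Set.inter_subset_inter_right _ (Ioc_subset_Ioc_right hxy)))
  have hlipm : ∀ x y, x ≤ y → m y ≤ m x + (y - x) := by
    intro x y hxy
    have hsub : U ∩ Ioc a y ⊆ (U ∩ Ioc a x) ∪ Ioc x y := by
      rintro u ⟨hu1, hu2, hu3⟩
      rcases le_total u x with h | h
      · exact Or.inl ⟨hu1, hu2, h⟩
      · rcases lt_or_eq_of_le h with h | h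
        · exact Or.inr ⟨h, hu3⟩
        · exact Or.inl ⟨hu1, hu2, h.ge⟩
    calc m y ≤ ((volume (U ∩ Ioc a x)) + volume (Ioc x y)).toReal := by
          apply ENNReal.toReal_mono
          · exact ENNReal.add_ne_top.mpr ⟨hUfin x, by simp [Real.volume_Ioc]⟩
          · exact (measure_mono hsub).trans (measure_union_le _ _)
      _ = m x + (y - x) := by
          rw [ENNReal.toReal_add (hUfin x) (by simp [Real.volume_Ioc]),
            Real.volume_Ioc, ENNReal.toReal_ofReal (by linarith)]
  have hcm : Continuous m := by
    refine LipschitzWith.continuous (K := 1) (LipschitzWith.of_dist_le_mul fun x y => ?_)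
    rw [Real.dist_eq, Real.dist_eq, NNReal.coe_one, one_mul]
    rcases le_total x y with h | h
    · have h1 := hmono h; have h2 := hlipm x y h
      rw [abs_le]; constructor <;> [skip; skip] <;> rw [abs_of_nonpos (by linarith)] <;> linarith
    · have h1 := hmono h; have h2 := hlipm y x h
      rw [abs_le]; constructor <;> [skip; skip] <;> rw [abs_of_nonneg (by linarith)] <;> linarith
  have hfull : ∀ x z, a ≤ x → x ≤ z → Ioc x z ⊆ U → m x + (z - x) ≤ m z := by
    intro x z hax hxz hsub
    have hdisj : Disjoint (U ∩ Ioc a x) (Ioc x z) := by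
      refine Set.disjoint_left.mpr ?_
      rintro u ⟨_, _, hu2⟩ ⟨hu3, _⟩
      exact absurd hu3 (not_lt.mpr hu2)
    have hsub2 : (U ∩ Ioc a x) ∪ Ioc x z ⊆ U ∩ Ioc a z := by
      rintro u (⟨h1, h2, h3⟩ | h)
      · exact ⟨h1, h2, h3.trans hxz⟩
      · exact ⟨hsub h, hax.trans_lt h.1, h.2⟩
    have := measure_mono (μ := volume) hsub2
    rw [measure_union hdisj measurableSet_Ioc] at this
    have hrw : m x + (z - x) = ((volume (U ∩ Ioc a x)) + volume (Ioc x z)).toReal := by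
      rw [ENNReal.toReal_add (hUfin x) (by simp [Real.volume_Ioc]),
        Real.volume_Ioc, ENNReal.toReal_ofReal (by linarith)]
    rw [hrw]
    exact ENNReal.toReal_mono (hUfin z) this
  set C : ℝ := (K : ℝ) + |c| with hCdef
  have hC0 : 0 ≤ C := add_nonneg K.coe_nonneg (abs_nonneg c)
  set s : Set ℝ := {x | f x - f a ≤ (c + ε) * (x - a) + (C + ε) * m x} with hsdef
  have hsub : Icc a b ⊆ s := by
    apply IsClosed.Icc_subset_of_forall_exists_gt
    · refine IsClosed.inter ?_ isClosed_Icc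
      have : s = (fun x => f x - f a - ((c + ε) * (x - a) + (C + ε) * m x)) ⁻¹' Iic 0 := by
        ext x; simp [hsdef, sub_nonpos]
      rw [this]
      exact IsClosed.preimage (by fun_prop) isClosed_Iic
    · show f a - f a ≤ _
      have : m a = 0 := by simp [hmdef]
      simp [this]
    · rintro x ⟨hxs, hxI⟩ y hy
      have hy' : x < y := hy
      by_cases hxU : x ∈ U
      · obtain ⟨r, hr, hball⟩ := Metric.isOpen_iff.mp hUopen x hxU
        set z := min y (min b (x + r / 2)) with hzdef
        have hxz : x < z := lt_min hy' (lt_min hxI.2 (by linarith))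
        have hzb : z ≤ b := (min_le_right _ _).trans (min_le_left _ _)
        have hzr : z ≤ x + r / 2 := (min_le_right _ _).trans (min_le_right _ _)
        have hIoc : Ioc x z ⊆ U := by
          intro u hu
          apply hball
          rw [Metric.mem_ball, Real.dist_eq, abs_of_pos (by linarith [hu.1])]
          linarith [hu.2]
        have hm := hfull x z hxI.1 hxz.le hIoc
        have hfz : f z - f x ≤ (K : ℝ) * (z - x) := by
          have := (lipschitzOnWith_iff_dist_le_mul.mp hK) z ⟨hxI.1.trans hxz.le, hzb⟩
            x ⟨hxI.1, hxI.2.le⟩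
          rw [Real.dist_eq, Real.dist_eq] at this
          rw [show |z - x| = z - x from abs_of_pos (by linarith)] at this
          calc f z - f x ≤ |f z - f x| := le_abs_self _
            _ ≤ (K : ℝ) * (z - x) := this
        have hmz : m x ≤ m z := hmono hxz.le
        have habs : -c ≤ |c| := neg_le_abs c
        refine ⟨z, ?_, ⟨hxz, min_le_left _ _⟩⟩
        show f z - f a ≤ (c + ε) * (z - a) + (C + ε) * m z
        have hxs' : f x - f a ≤ (c + ε) * (x - a) + (C + ε) * m x := hxs
        nlinarith [mul_le_mul_of_nonneg_left hm (by linarith : (0:ℝ) ≤ C + ε),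
          mul_nonneg (by linarith : (0:ℝ) ≤ c + |c| + 2*ε) (by linarith : (0:ℝ) ≤ z - x)]
      · have hxN : x ∉ N := fun h => hxU (hNU h)
        have hP : HasDerivAt f (deriv f x) x ∧ deriv f x ≤ c := not_not.mp hxN hxI
        obtain ⟨hdiff, hdle⟩ := hP
        have hslope' : Filter.Tendsto (slope f x) (nhdsWithin x (Ioi x)) (nhds (deriv f x)) :=
          (hasDerivAt_iff_tendsto_slope.mp hdiff).mono_left
            (nhdsWithin_mono x (fun u hu => hu.ne'))
        have hev1 : ∀ᶠ z in nhdsWithin x (Ioi x), slope f x z < c + ε :=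
          hslope'.eventually_lt_const (by linarith)
        have hmem : Ioc x (min y b) ∈ nhdsWithin x (Ioi x) :=
          Ioc_mem_nhdsGT_of_mem ⟨le_rfl, lt_min hy' hxI.2⟩
        have hev2 : ∀ᶠ z in nhdsWithin x (Ioi x), z ∈ Ioc x (min y b) :=
          Filter.eventually_of_mem hmem fun u hu => hu
        obtain ⟨z, hz1, hz2⟩ := (hev1.and hev2).exists
        have hzx : x < z := hz2.1
        rw [slope_def_field] at hz1
        have hfz : f z - f x < (c + ε) * (z - x) := by
          rw [div_lt_iff₀ (by linarith)] at hz1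
          linarith
        have hxs' : f x - f a ≤ (c + ε) * (x - a) + (C + ε) * m x := hxs
        have hmz := mul_le_mul_of_nonneg_left (hmono hzx.le) (show (0:ℝ) ≤ C + ε by linarith)
        refine ⟨z, ?_, hz2.1, hz2.2.trans (min_le_left _ _)⟩
        show f z - f a ≤ (c + ε) * (z - a) + (C + ε) * m z
        nlinarith
  have hb : b ∈ s := hsub ⟨hab, le_rfl⟩
  have hmb : m b ≤ ε := by
    refine ENNReal.toReal_le_of_le_ofReal hε.le ?_
    exact ((measure_mono Set.inter_subset_left).trans hUvol.le)
  have hbs : f b - f a ≤ (c + ε) * (b - a) + (C + ε) * m b := hb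
  have : (C + ε) * m b ≤ (C + ε) * ε := mul_le_mul_of_nonneg_left hmb (by linarith)
  calc f b - f a ≤ (c + ε) * (b - a) + (C + ε) * m b := hbs
    _ ≤ (c + ε) * (b - a) + ((K:ℝ) + |c| + ε) * ε := by rw [hCdef] at this ⊢; linarith


/-- ODE comparison lemma: if a locally Lipschitz function `ρ̃`
satisfies, for every `ε > 0`, `ρ̃' < −δ_ε` a.e. on `{t ≥ T_ε : ρ̃(t) ≥ ε}`, then
`limsup_{t→∞} ρ̃(t) ≤ 0`. -/
theorem limsup_nonpos_of_ae_decay (ρ : ℝ → ℝ)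
    (hlip : LocallyLipschitz ρ)
    (hdec : ∀ ε : ℝ, 0 < ε → ∃ δ : ℝ, 0 < δ ∧ ∃ T : ℝ, 0 ≤ T ∧
      ∀ᵐ t : ℝ ∂volume, T ≤ t → ε ≤ ρ t → deriv ρ t < -δ) :
    Filter.limsup ρ Filter.atTop ≤ 0 := by
  have hcont : Continuous ρ := hlip.continuous
  have hdiffae : ∀ᵐ x ∂(volume : Measure ℝ), DifferentiableAt ℝ ρ x := by
    have h1 : ∀ n : ℕ, ∀ᵐ x ∂(volume : Measure ℝ),
        x ∈ Set.Ioo (-(n:ℝ) - 1) ((n:ℝ) + 1) → DifferentiableAt ℝ ρ x := by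
      intro n
      obtain ⟨K, hK⟩ := hlip.exists_lipschitzOnWith_Icc (-(n:ℝ) - 2) ((n:ℝ) + 2)
      filter_upwards [hK.ae_differentiableWithinAt_of_mem_real] with x hx hmem
      have hx' := hx ⟨by linarith [hmem.1], by linarith [hmem.2]⟩
      exact hx'.differentiableAt
        (Icc_mem_nhds (by linarith [hmem.1]) (by linarith [hmem.2]))
    filter_upwards [(MeasureTheory.ae_all_iff).mpr h1] with x hx
    have h1 := Nat.le_ceil |x|
    have h2 := neg_abs_le x
    have h3 := le_abs_self x
    exact hx ⌈|x|⌉₊ ⟨by linarith, by linarith⟩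
  have hev : ∀ ε : ℝ, 0 < ε → ∀ᶠ t in Filter.atTop, ρ t ≤ ε := by
    intro ε hε
    obtain ⟨δ, hδ, T, hT, hae⟩ := hdec ε hε
    have happly : ∀ p q : ℝ, T ≤ p → p ≤ q → (∀ u ∈ Set.Ico p q, ε ≤ ρ u) →
        ρ q - ρ p ≤ -δ * (q - p) := by
      intro p q hTp hpq hge
      obtain ⟨K, hK⟩ := hlip.exists_lipschitzOnWith_Icc p q
      refine key_decay hpq hcont hK ?_
      filter_upwards [hdiffae, hae] with x h1 h2 hx
      exact ⟨h1.hasDerivAt, (h2 (hTp.trans hx.1) (hge x hx)).le⟩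
    have hex : ∃ t₀, T ≤ t₀ ∧ ρ t₀ < ε := by
      by_contra h
      push_neg at h
      set q := T + (ρ T - ε) / δ + 1 with hqdef
      have h0 : ε ≤ ρ T := h T le_rfl
      have hdiv : 0 ≤ (ρ T - ε) / δ := div_nonneg (by linarith) hδ.le
      have hq1 : T ≤ q := by rw [hqdef]; linarith
      have hkey := happly T q le_rfl hq1 (fun u hu => h u hu.1)
      have hq2 : ε ≤ ρ q := h q hq1
      have : -δ * (q - T) = -(ρ T - ε) - δ := by
        have hδ' : δ ≠ 0 := hδ.ne'
        rw [hqdef]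
        field_simp
        ring
      linarith [hkey, this.le]
    obtain ⟨t₀, ht₀T, ht₀⟩ := hex
    rw [Filter.eventually_atTop]
    refine ⟨t₀, fun t ht => ?_⟩
    by_contra hcon
    push_neg at hcon
    have htne : t₀ < t := by
      rcases lt_or_eq_of_le ht with h | h
      · exact h
      · exfalso; rw [← h] at hcon; linarith
    set A := {u | u ∈ Set.Icc t₀ t ∧ ρ u ≤ ε} with hAdef
    have hAne : A.Nonempty := ⟨t₀, ⟨le_rfl, htne.le⟩, ht₀.le⟩
    have hAbdd : BddAbove A := ⟨t, fun u hu => hu.1.2⟩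
    have hAclosed : IsClosed A := by
      have : A = Set.Icc t₀ t ∩ ρ ⁻¹' Set.Iic ε := by ext u; simp [hAdef, Set.mem_setOf_eq]
      rw [this]
      exact IsClosed.inter isClosed_Icc (IsClosed.preimage hcont isClosed_Iic)
    set σ := sSup A with hσdef
    have hσA : σ ∈ A := hAclosed.csSup_mem hAne hAbdd
    have hσt : σ ≤ t := hσA.1.2
    have hσt₀ : t₀ ≤ σ := hσA.1.1
    have hσlt : σ < t := by
      rcases lt_or_eq_of_le hσt with h | h
      · exact h
      · exfalso; rw [h] at hσA; linarith [hσA.2]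
    have hgt : ∀ u, σ < u → u ≤ t → ε < ρ u := by
      intro u h1 h2
      by_contra hc; push_neg at hc
      exact absurd (le_csSup hAbdd ⟨⟨hσt₀.trans h1.le, h2⟩, hc⟩) (not_le.mpr h1)
    have hσε : ε ≤ ρ σ := by
      have htend : Filter.Tendsto ρ (nhdsWithin σ (Set.Ioi σ)) (nhds (ρ σ)) :=
        (hcont.tendsto σ).mono_left nhdsWithin_le_nhds
      exact ge_of_tendsto htend (Filter.eventually_of_mem
        (Ioc_mem_nhdsGT_of_mem ⟨le_rfl, hσlt⟩) fun u hu => (hgt u hu.1 hu.2).le)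
    have hkey := happly σ t (ht₀T.trans hσt₀) hσlt.le (fun u hu => by
      rcases lt_or_eq_of_le hu.1 with h | h
      · exact (hgt u h hu.2.le).le
      · rw [← h]; exact hσε)
    nlinarith [hσA.2, hσlt, hδ]
  rw [Filter.limsup_eq]
  by_cases hbdd : BddBelow {a | ∀ᶠ n in Filter.atTop, ρ n ≤ a}
  · by_contra hc
    push_neg at hc
    have h1 : sInf {a | ∀ᶠ n in Filter.atTop, ρ n ≤ a} ≤
        sInf {a | ∀ᶠ n in Filter.atTop, ρ n ≤ a} / 2 :=
      csInf_le hbdd (hev _ (by linarith))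
    linarith
  · rw [Real.sInf_of_not_bddBelow hbdd]
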